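/- arXiv:1211.2750 — 7 statements merged into one kernel-verified Lean document; each statement's English description precedes it below -/
import Mathlib

section
/- Let a < b, let h be a nonnegative function on an interval J ⊇ [0,1] which is symmetric about 1/2, i.e. h(t) = h(1-t) for all t ∈ [0,1], and let f, g : [a,b] → ℝ be positive h-logarithmically convex functions such that the product fg is integrable on [a,b] and the function t ↦ [f(a)g(a)·f(b)g(b)]^{h(t)} is integrable on [0,1]. Then (1/(b-a)) ∫_a^b f(x)g(x) dx ≤ ∫_0^1 [f(a)g(a)·f(b)g(b)]^{h(t)} dt. -/
open Set MeasureTheory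

/-- For `h` nonnegative on `[0,1]` and symmetric about `1/2`, and `f`, `g`
positive `h`-logarithmically convex functions on `[a,b]`, one has
`(1/(b-a)) ∫ₐᵇ f(x) g(x) dx ≤ ∫₀¹ (f(a)g(a) f(b)g(b)) ^ h(t) dt`. -/
theorem h_log_convex_product_hadamard
    (a b : ℝ) (hab : a < b) (h f g : ℝ → ℝ)
    (hh : ∀ t ∈ Icc (0:ℝ) 1, 0 ≤ h t)
    (hsymm : ∀ t ∈ Icc (0:ℝ) 1, h t = h (1 - t))
    (hf : ∀ x ∈ Icc a b, 0 < f x)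
    (hg : ∀ x ∈ Icc a b, 0 < g x)
    (hlcf : ∀ x ∈ Icc a b, ∀ y ∈ Icc a b, ∀ t ∈ Icc (0:ℝ) 1,
      f (t * x + (1 - t) * y) ≤ f x ^ h t * f y ^ h (1 - t))
    (hlcg : ∀ x ∈ Icc a b, ∀ y ∈ Icc a b, ∀ t ∈ Icc (0:ℝ) 1,
      g (t * x + (1 - t) * y) ≤ g x ^ h t * g y ^ h (1 - t))
    (hint1 : IntervalIntegrable (fun x => f x * g x) volume a b)
    (hint2 : IntervalIntegrable (fun t => (f a * g a * (f b * g b)) ^ h t) volume 0 1) :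
    (1 / (b - a)) * ∫ x in a..b, f x * g x ≤
      ∫ t in (0:ℝ)..1, (f a * g a * (f b * g b)) ^ h t := by
  have hba : a - b ≠ 0 := by linarith
  have ha : a ∈ Icc a b := ⟨le_refl a, hab.le⟩
  have hb : b ∈ Icc a b := ⟨hab.le, le_refl b⟩
  -- change of variables
  have hcv : (1 / (b - a)) * ∫ x in a..b, f x * g x
      = ∫ t in (0:ℝ)..1, f ((a - b) * t + b) * g ((a - b) * t + b) := by
    rw [intervalIntegral.integral_comp_mul_add (fun x => f x * g x) hba b]
    simp only [mul_zero, zero_add, mul_one, sub_add_cancel, smul_eq_mul]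
    rw [intervalIntegral.integral_symm a b]
    field_simp
    rw [div_eq_iff (show b - a ≠ 0 by linarith)]
    ring
  rw [hcv]
  -- integrability of composed function
  have hcomp : IntervalIntegrable (fun t => f ((a - b) * t + b) * g ((a - b) * t + b))
      volume 0 1 := by
    have h1 := (hint1.comp_add_right b).comp_mul_left (c := a - b)
    simp only [sub_sub_cancel, sub_self, div_self hba, zero_div] at h1
    exact h1.symm
  refine intervalIntegral.integral_mono_on zero_le_one hcomp hint2 ?_
  intro t ht
  have hmem : (a - b) * t + b ∈ Icc a b := by
    constructor <;> nlinarith [ht.1, ht.2]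
  have heq : (a - b) * t + b = t * a + (1 - t) * b := by ring
  have h1t : h (1 - t) = h t := (hsymm t ht).symm
  have hfa' := hf a ha
  have hfb' := hf b hb
  have hga' := hg a ha
  have hgb' := hg b hb
  have hfb := hlcf a ha b hb t ht
  have hgb := hlcg a ha b hb t ht
  rw [← heq] at hfb hgb
  have key : f ((a - b) * t + b) * g ((a - b) * t + b)
      ≤ (f a ^ h t * f b ^ h (1 - t)) * (g a ^ h t * g b ^ h (1 - t)) := by
    apply mul_le_mul hfb hgb (le_of_lt (hg _ hmem)) (by positivity)
  refine key.trans (le_of_eq ?_)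
  rw [h1t]
  rw [Real.mul_rpow (by positivity) (by positivity),
      Real.mul_rpow (le_of_lt (hf a ha)) (le_of_lt (hg a ha)),
      Real.mul_rpow (le_of_lt (hf b hb)) (le_of_lt (hg b hb))]
  ring
end

section
/- Let a < b, let h be a nonnegative function on an interval J ⊇ [0,1], let f, g : [a,b] → ℝ be positive h-logarithmically convex functions with fg integrable on [a,b], and let α, β > 0 with α + β = 1. If the function t ↦ α·([f(a)]^{h(t)}[f(b)]^{h(1-t)})^{1/α} + β·([g(a)]^{h(t)}[g(b)]^{h(1-t)})^{1/β} is integrable on [0,1], then (1/(b-a)) ∫_a^b f(x)g(x) dx ≤ ∫_0^1 [ α·([f(a)]^{h(t)}[f(b)]^{h(1-t)})^{1/α} + β·([g(a)]^{h(t)}[g(b)]^{h(1-t)})^{1/β} ] dt. -/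
open Set MeasureTheory

/-- Young-type bound for the product of two positive `h`-logarithmically
convex functions on `[a,b]`. -/
theorem h_log_convex_product_young_split
    (a b : ℝ) (hab : a < b) (h f g : ℝ → ℝ) (α β : ℝ)
    (hα : 0 < α) (hβ : 0 < β) (hαβ : α + β = 1)
    (hh : ∀ t ∈ Icc (0:ℝ) 1, 0 ≤ h t)
    (hf : ∀ x ∈ Icc a b, 0 < f x)
    (hg : ∀ x ∈ Icc a b, 0 < g x)
    (hlcf : ∀ x ∈ Icc a b, ∀ y ∈ Icc a b, ∀ t ∈ Icc (0:ℝ) 1,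
      f (t * x + (1 - t) * y) ≤ f x ^ h t * f y ^ h (1 - t))
    (hlcg : ∀ x ∈ Icc a b, ∀ y ∈ Icc a b, ∀ t ∈ Icc (0:ℝ) 1,
      g (t * x + (1 - t) * y) ≤ g x ^ h t * g y ^ h (1 - t))
    (hint1 : IntervalIntegrable (fun x => f x * g x) volume a b)
    (hint2 : IntervalIntegrable
      (fun t => α * (f a ^ h t * f b ^ h (1 - t)) ^ (1 / α) +
                β * (g a ^ h t * g b ^ h (1 - t)) ^ (1 / β)) volume 0 1) :
    (1 / (b - a)) * ∫ x in a..b, f x * g x ≤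
      ∫ t in (0:ℝ)..1,
        (α * (f a ^ h t * f b ^ h (1 - t)) ^ (1 / α) +
         β * (g a ^ h t * g b ^ h (1 - t)) ^ (1 / β)) := by
  have hc : a - b ≠ 0 := by linarith
  -- membership facts
  have ha' : a ∈ Icc a b := ⟨le_refl _, hab.le⟩
  have hb' : b ∈ Icc a b := ⟨hab.le, le_refl _⟩
  have hmem : ∀ t ∈ Icc (0:ℝ) 1, t * a + (1 - t) * b ∈ Icc a b := by
    intro t ht
    constructor
    · nlinarith [ht.1, ht.2]
    · nlinarith [ht.1, ht.2]
  -- conjugate exponents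
  have hconj : Real.HolderConjugate (1 / α) (1 / β) := by
    rw [Real.holderConjugate_iff]
    constructor
    · rw [lt_div_iff₀ hα]; linarith
    · field_simp
      linarith
  -- change of variables identity
  have key : (∫ t in (0:ℝ)..1, f (t * a + (1 - t) * b) * g (t * a + (1 - t) * b))
      = (1 / (b - a)) * ∫ x in a..b, f x * g x := by
    have := intervalIntegral.integral_comp_mul_add (a := (0:ℝ)) (b := 1)
      (f := fun x => f x * g x) hc b
    have heq : ∀ t : ℝ, f (t * a + (1 - t) * b) * g (t * a + (1 - t) * b)
        = (fun x => f x * g x) ((a - b) * t + b) := by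
      intro t; ring_nf
    rw [intervalIntegral.integral_congr (g := fun t => (fun x => f x * g x) ((a - b) * t + b))
      (fun t _ => heq t), this]
    rw [intervalIntegral.integral_symm]
    simp only [smul_eq_mul, mul_zero, zero_add, mul_one]
    rw [show (a - b)⁻¹ = -(b - a)⁻¹ by rw [← neg_sub b a, inv_neg]]
    ring
  -- integrability of the composed function
  have hcomp : IntervalIntegrable
      (fun t => f (t * a + (1 - t) * b) * g (t * a + (1 - t) * b)) volume 0 1 := by
    have h1 := (hint1.comp_add_right b).comp_mul_left (c := a - b)
    simp only [sub_self, div_self hc, zero_div] at h1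
    have h2 := h1.symm
    exact h2.congr (fun t _ => by ring_nf)
  -- pointwise bound on [0,1]
  have hpt : ∀ t ∈ Icc (0:ℝ) 1,
      f (t * a + (1 - t) * b) * g (t * a + (1 - t) * b) ≤
        α * (f a ^ h t * f b ^ h (1 - t)) ^ (1 / α) +
        β * (g a ^ h t * g b ^ h (1 - t)) ^ (1 / β) := by
    intro t ht
    have hx := hmem t ht
    have hF : f (t * a + (1 - t) * b) ≤ f a ^ h t * f b ^ h (1 - t) := hlcf a ha' b hb' t ht
    have hG : g (t * a + (1 - t) * b) ≤ g a ^ h t * g b ^ h (1 - t) := hlcg a ha' b hb' t ht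
    have hfp := hf _ hx
    have hgp := hg _ hx
    have hFnn : (0:ℝ) ≤ f a ^ h t * f b ^ h (1 - t) :=
      mul_nonneg (Real.rpow_nonneg (hf a ha').le _) (Real.rpow_nonneg (hf b hb').le _)
    have hGnn : (0:ℝ) ≤ g a ^ h t * g b ^ h (1 - t) :=
      mul_nonneg (Real.rpow_nonneg (hg a ha').le _) (Real.rpow_nonneg (hg b hb').le _)
    calc f (t * a + (1 - t) * b) * g (t * a + (1 - t) * b)
        ≤ (f a ^ h t * f b ^ h (1 - t)) * (g a ^ h t * g b ^ h (1 - t)) :=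
          mul_le_mul hF hG hgp.le hFnn
      _ ≤ (f a ^ h t * f b ^ h (1 - t)) ^ (1/α) / (1/α) +
          (g a ^ h t * g b ^ h (1 - t)) ^ (1/β) / (1/β) :=
          Real.young_inequality_of_nonneg hFnn hGnn hconj
      _ = α * (f a ^ h t * f b ^ h (1 - t)) ^ (1 / α) +
          β * (g a ^ h t * g b ^ h (1 - t)) ^ (1 / β) := by
          field_simp
  rw [← key]
  exact intervalIntegral.integral_mono_on (by norm_num) hcomp hint2
    (fun t ht => hpt t ht)
end

section
/- Let a < b, let h be a nonnegative function on an interval J ⊇ [0,1], let f, g : [a,b] → ℝ be positive h-logarithmically convex functions with fg integrable on [a,b], and let α, β > 0 with α + β = 1. If the function t ↦ α·[f(a)g(a)]^{h(t)/α} + β·[f(b)g(b)]^{h(1-t)/β} is integrable on [0,1], then (1/(b-a)) ∫_a^b f(x)g(x) dx ≤ ∫_0^1 { α·[f(a)g(a)]^{h(t)/α} + β·[f(b)g(b)]^{h(1-t)/β} } dt. -/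
open Set MeasureTheory

/-- Second Young-type bound for the product of two positive
`h`-logarithmically convex functions on `[a,b]`. -/
theorem h_log_convex_product_young_split'
    (a b : ℝ) (hab : a < b) (h f g : ℝ → ℝ) (α β : ℝ)
    (hα : 0 < α) (hβ : 0 < β) (hαβ : α + β = 1)
    (hh : ∀ t ∈ Icc (0:ℝ) 1, 0 ≤ h t)
    (hf : ∀ x ∈ Icc a b, 0 < f x)
    (hg : ∀ x ∈ Icc a b, 0 < g x)
    (hlcf : ∀ x ∈ Icc a b, ∀ y ∈ Icc a b, ∀ t ∈ Icc (0:ℝ) 1,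
      f (t * x + (1 - t) * y) ≤ f x ^ h t * f y ^ h (1 - t))
    (hlcg : ∀ x ∈ Icc a b, ∀ y ∈ Icc a b, ∀ t ∈ Icc (0:ℝ) 1,
      g (t * x + (1 - t) * y) ≤ g x ^ h t * g y ^ h (1 - t))
    (hint1 : IntervalIntegrable (fun x => f x * g x) volume a b)
    (hint2 : IntervalIntegrable
      (fun t => α * (f a * g a) ^ (h t / α) + β * (f b * g b) ^ (h (1 - t) / β))
      volume 0 1) :
    (1 / (b - a)) * ∫ x in a..b, f x * g x ≤
      ∫ t in (0:ℝ)..1,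
        (α * (f a * g a) ^ (h t / α) + β * (f b * g b) ^ (h (1 - t) / β)) := by
  have hba : a - b ≠ 0 := by linarith
  have ha : a ∈ Icc a b := ⟨le_refl a, hab.le⟩
  have hb : b ∈ Icc a b := ⟨hab.le, le_refl b⟩
  -- rewrite LHS via substitution x = (a-b)t + b
  have key : (∫ t in (0:ℝ)..1, f ((a - b) * t + b) * g ((a - b) * t + b))
      = (1 / (b - a)) * ∫ x in a..b, f x * g x := by
    rw [intervalIntegral.integral_comp_mul_add (fun x => f x * g x) hba b]
    rw [show (a - b) * 1 + b = a by ring, show (a - b) * 0 + b = b by ring]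
    rw [intervalIntegral.integral_symm a b, smul_eq_mul, one_div,
      show (b - a)⁻¹ = -(a - b)⁻¹ by rw [show b - a = -(a - b) by ring, inv_neg]]
    ring
  rw [← key]
  -- integrability of the composed function
  have hFint : IntervalIntegrable
      (fun t => f ((a - b) * t + b) * g ((a - b) * t + b)) volume 0 1 := by
    have := (hint1.comp_add_right b).comp_mul_left (c := a - b)
    rw [div_self hba] at this
    simpa using this.symm
  refine intervalIntegral.integral_mono_on zero_le_one hFint hint2 ?_
  intro t ht
  have ht' : 1 - t ∈ Icc (0:ℝ) 1 := ⟨by linarith [ht.2], by linarith [ht.1]⟩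
  have hmem : (a - b) * t + b ∈ Icc a b := by
    constructor
    · nlinarith [ht.1, ht.2]
    · nlinarith [ht.1, ht.2]
  have heq : (a - b) * t + b = t * a + (1 - t) * b := by ring
  have hfb : f ((a - b) * t + b) ≤ f a ^ h t * f b ^ h (1 - t) := by
    rw [heq]; exact hlcf a ha b hb t ht
  have hgb : g ((a - b) * t + b) ≤ g a ^ h t * g b ^ h (1 - t) := by
    rw [heq]; exact hlcg a ha b hb t ht
  have hfa0 := (hf a ha).le
  have hga0 := (hg a ha).le
  have hfb0 := (hf b hb).le
  have hgb0 := (hg b hb).le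
  have step1 : f ((a - b) * t + b) * g ((a - b) * t + b)
      ≤ (f a * g a) ^ h t * (f b * g b) ^ h (1 - t) := by
    have hprod : f ((a - b) * t + b) * g ((a - b) * t + b)
        ≤ (f a ^ h t * f b ^ h (1 - t)) * (g a ^ h t * g b ^ h (1 - t)) :=
      mul_le_mul hfb hgb (hg _ hmem).le
        (mul_nonneg (Real.rpow_nonneg hfa0 _) (Real.rpow_nonneg hfb0 _))
    calc f ((a - b) * t + b) * g ((a - b) * t + b)
        ≤ (f a ^ h t * f b ^ h (1 - t)) * (g a ^ h t * g b ^ h (1 - t)) := hprod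
      _ = (f a * g a) ^ h t * (f b * g b) ^ h (1 - t) := by
          rw [Real.mul_rpow hfa0 hga0, Real.mul_rpow hfb0 hgb0]; ring
  have hconj : (1/α).HolderConjugate (1/β) := by
    constructor
    · rw [one_div, one_div, inv_inv, inv_inv, inv_one]; exact hαβ
    · positivity
    · positivity
  have hy := Real.young_inequality_of_nonneg
    (Real.rpow_nonneg (mul_nonneg hfa0 hga0) (h t))
    (Real.rpow_nonneg (mul_nonneg hfb0 hgb0) (h (1 - t))) hconj
  have e1 : ((f a * g a) ^ h t) ^ (1/α) = (f a * g a) ^ (h t / α) := by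
    rw [← Real.rpow_mul (mul_nonneg hfa0 hga0), mul_one_div]
  have e2 : ((f b * g b) ^ h (1 - t)) ^ (1/β) = (f b * g b) ^ (h (1 - t) / β) := by
    rw [← Real.rpow_mul (mul_nonneg hfb0 hgb0), mul_one_div]
  rw [e1, e2] at hy
  have e3 : (f a * g a) ^ (h t / α) / (1/α) = α * (f a * g a) ^ (h t / α) := by
    rw [one_div, div_eq_mul_inv, inv_inv, mul_comm]
  have e4 : (f b * g b) ^ (h (1 - t) / β) / (1/β) = β * (f b * g b) ^ (h (1 - t) / β) := by
    rw [one_div, div_eq_mul_inv, inv_inv, mul_comm]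
  rw [e3, e4] at hy
  exact step1.trans hy
end

section
/- Let I = [a,b] ⊂ (0,∞), let h be a nonnegative function on an interval J ⊇ [0,1], and let f : I → (0,∞) be an h-geometrically convex function which is monotonically decreasing on I. Then f is h-logarithmically convex on I, i.e. f(tx+(1-t)y) ≤ [f(x)]^{h(t)} · [f(y)]^{h(1-t)} for all x,y ∈ I and t ∈ [0,1]. -/
open Set

/-- A decreasing `h`-geometrically convex function on `[a,b] ⊂ (0,∞)`
is `h`-logarithmically convex. -/
theorem h_log_convex_of_h_geom_convex_antitone
    (a b : ℝ) (ha : 0 < a) (hab : a ≤ b) (h f : ℝ → ℝ)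
    (hh : ∀ t ∈ Icc (0:ℝ) 1, 0 ≤ h t)
    (hf : ∀ x ∈ Icc a b, 0 < f x)
    (hgc : ∀ x ∈ Icc a b, ∀ y ∈ Icc a b, ∀ t ∈ Icc (0:ℝ) 1,
      f (x ^ t * y ^ (1 - t)) ≤ f x ^ h t * f y ^ h (1 - t))
    (hdec : ∀ x ∈ Icc a b, ∀ y ∈ Icc a b, x ≤ y → f y ≤ f x) :
    ∀ x ∈ Icc a b, ∀ y ∈ Icc a b, ∀ t ∈ Icc (0:ℝ) 1,
      f (t * x + (1 - t) * y) ≤ f x ^ h t * f y ^ h (1 - t) := by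
  intro x hx y hy t ht
  obtain ⟨ht0, ht1⟩ := ht
  have ht1' : 0 ≤ 1 - t := by linarith
  have hxpos : 0 < x := lt_of_lt_of_le ha hx.1
  have hypos : 0 < y := lt_of_lt_of_le ha hy.1
  have hgmem : x ^ t * y ^ (1 - t) ∈ Icc a b := by
    constructor
    · calc a = a ^ t * a ^ (1 - t) := by
            rw [← Real.rpow_add ha]; simp
      _ ≤ x ^ t * y ^ (1 - t) :=
          mul_le_mul (Real.rpow_le_rpow ha.le hx.1 ht0)
            (Real.rpow_le_rpow ha.le hy.1 ht1')
            (Real.rpow_nonneg ha.le _) (Real.rpow_nonneg hxpos.le _)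
    · calc x ^ t * y ^ (1 - t) ≤ b ^ t * b ^ (1 - t) :=
          mul_le_mul (Real.rpow_le_rpow hxpos.le hx.2 ht0)
            (Real.rpow_le_rpow hypos.le hy.2 ht1')
            (Real.rpow_nonneg hypos.le _) (Real.rpow_nonneg (ha.trans_le hab).le _)
      _ = b := by rw [← Real.rpow_add (ha.trans_le hab)]; simp
  have hamgm : x ^ t * y ^ (1 - t) ≤ t * x + (1 - t) * y :=
    Real.geom_mean_le_arith_mean2_weighted ht0 ht1' hxpos.le hypos.le (by ring)
  have hmem2 : t * x + (1 - t) * y ∈ Icc a b := by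
    constructor
    · nlinarith [hx.1, hy.1]
    · nlinarith [hx.2, hy.2]
  calc f (t * x + (1 - t) * y) ≤ f (x ^ t * y ^ (1 - t)) := hdec _ hgmem _ hmem2 hamgm
    _ ≤ f x ^ h t * f y ^ h (1 - t) := hgc x hx y hy t ⟨ht0, ht1⟩
end

section
/- Let I ⊂ (0,∞) be an interval, let h be a nonnegative function on an interval J ⊇ [0,1], and let f : I → (0,∞) be an h-geometrically convex function. Let x, y ∈ I with 0 < x < y, and assume the function γ ↦ f(γ)·f(xy/γ)/γ is integrable on [x,y] and the function t ↦ [f(x)f(y)]^{h(t)+h(1-t)} is integrable on [0,1]. Then (1/(ln y − ln x)) ∫_x^y f(γ)·f(xy/γ) · (dγ/γ) ≤ ∫_0^1 [f(x)·f(y)]^{h(t)+h(1-t)} dt. -/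
open Set MeasureTheory

/-- Hadamard-type inequality for an `h`-geometrically convex function on an
interval `I ⊂ (0,∞)`. -/
theorem h_geom_convex_product_integral_bound
    (I : Set ℝ) (hI : I ⊆ Ioi (0:ℝ)) (hIconv : Convex ℝ I)
    (h f : ℝ → ℝ)
    (hh : ∀ t ∈ Icc (0:ℝ) 1, 0 ≤ h t)
    (hf : ∀ x ∈ I, 0 < f x)
    (hgc : ∀ x ∈ I, ∀ y ∈ I, ∀ t ∈ Icc (0:ℝ) 1,
      f (x ^ t * y ^ (1 - t)) ≤ f x ^ h t * f y ^ h (1 - t))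
    (x y : ℝ) (hx : x ∈ I) (hy : y ∈ I) (hxpos : 0 < x) (hxy : x < y)
    (hint1 : IntervalIntegrable (fun γ => f γ * f (x * y / γ) / γ) volume x y)
    (hint2 : IntervalIntegrable (fun t => (f x * f y) ^ (h t + h (1 - t))) volume 0 1) :
    (1 / (Real.log y - Real.log x)) * ∫ γ in x..y, f γ * f (x * y / γ) / γ ≤
      ∫ t in (0:ℝ)..1, (f x * f y) ^ (h t + h (1 - t)) := by
  have hypos : 0 < y := hxpos.trans hxy
  set L : ℝ := Real.log y - Real.log x with hL
  have hLpos : 0 < L := sub_pos.2 (Real.log_lt_log hxpos hxy)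
  set g : ℝ → ℝ := fun t => Real.exp (Real.log x + t * L) with hg
  have hgpos : ∀ t, 0 < g t := fun t => Real.exp_pos _
  have hg0 : g 0 = x := by simp [hg, Real.exp_log hxpos]
  have hg1 : g 1 = y := by
    simp only [hg, one_mul, hL]
    rw [show Real.log x + (Real.log y - Real.log x) = Real.log y by ring,
      Real.exp_log hypos]
  have hderiv : ∀ t : ℝ, HasDerivAt g (L * g t) t := by
    intro t
    have h1 : HasDerivAt (fun t : ℝ => Real.log x + t * L) L t := by
      simpa using (hasDerivAt_mul_const L).const_add (Real.log x)
    exact ((Real.hasDerivAt_exp (Real.log x + t * L)).comp t h1).congr_deriv (mul_comm _ _)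
  have hmono : StrictMono g := fun a b hab => by
    apply Real.exp_lt_exp.2
    have := mul_lt_mul_of_pos_right hab hLpos
    linarith
  have hmem : ∀ t ∈ Icc (0:ℝ) 1, g t ∈ Icc x y := by
    intro t ht
    constructor
    · rw [← hg0]; exact hmono.monotone ht.1
    · rw [← hg1]; exact hmono.monotone ht.2
  have hsub : Icc x y ⊆ I := hIconv.ordConnected.out hx hy
  have hmemI : ∀ t ∈ Icc (0:ℝ) 1, g t ∈ I := fun t ht => hsub (hmem t ht)
  -- g(1-t) = x*y / g t
  have hgmul : ∀ t : ℝ, g t * g (1 - t) = x * y := by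
    intro t
    rw [hg]
    simp only
    rw [← Real.exp_add, show Real.log x + t * L + (Real.log x + (1 - t) * L)
      = Real.log x + Real.log y by rw [hL]; ring, Real.exp_add,
      Real.exp_log hxpos, Real.exp_log hypos]
  have hgdiv : ∀ t : ℝ, x * y / g t = g (1 - t) := by
    intro t
    field_simp [← hgmul t, (hgpos t).ne', mul_comm]
    exact (hgmul t).symm
  -- g t as a product of rpow
  have hgrpow : ∀ t : ℝ, g t = x ^ (1 - t) * y ^ t := by
    intro t
    rw [Real.rpow_def_of_pos hxpos, Real.rpow_def_of_pos hypos, ← Real.exp_add, hg]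
    simp only
    congr 1
    rw [hL]; ring
  -- pointwise bound
  have hbound : ∀ t ∈ Icc (0:ℝ) 1, f (g t) * f (g (1 - t)) ≤
      (f x * f y) ^ (h t + h (1 - t)) := by
    intro t ht
    have ht' : 1 - t ∈ Icc (0:ℝ) 1 := ⟨by linarith [ht.2], by linarith [ht.1]⟩
    have h1 : f (g t) ≤ f x ^ h (1 - t) * f y ^ h t := by
      have := hgc x hx y hy (1 - t) ht'
      rw [sub_sub_cancel, ← hgrpow t] at this
      exact this
    have h2 : f (g (1 - t)) ≤ f x ^ h t * f y ^ h (1 - t) := by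
      have e : g (1 - t) = x ^ t * y ^ (1 - t) := by rw [hgrpow (1 - t), sub_sub_cancel]
      rw [e]
      exact hgc x hx y hy t ht
    have hfx := hf x hx
    have hfy := hf y hy
    calc f (g t) * f (g (1 - t))
        ≤ (f x ^ h (1 - t) * f y ^ h t) * (f x ^ h t * f y ^ h (1 - t)) := by
          apply mul_le_mul h1 h2 (hf _ (hmemI _ ht')).le
          positivity
      _ = (f x * f y) ^ (h t + h (1 - t)) := by
          rw [Real.mul_rpow hfx.le hfy.le, Real.rpow_add hfx, Real.rpow_add hfy]
          ring
  -- image of g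
  have himage : g '' Icc 0 1 = Icc x y := by
    apply Subset.antisymm
    · rintro _ ⟨t, ht, rfl⟩; exact hmem t ht
    · have hcont : Continuous g :=
        Real.continuous_exp.comp (continuous_const.add (continuous_id.mul continuous_const))
      have h4 := intermediate_value_Icc (by norm_num : (0:ℝ) ≤ 1) hcont.continuousOn
      rw [hg0, hg1] at h4
      exact h4
  have hinj : InjOn g (Icc 0 1) := hmono.injective.injOn
  have hderivW : ∀ t ∈ Icc (0:ℝ) 1, HasDerivWithinAt g (L * g t) (Icc 0 1) t :=
    fun t _ => (hderiv t).hasDerivWithinAt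
  -- the change of variables
  have hEqOn : EqOn (fun t => |L * g t| • (f (g t) * f (x * y / g t) / g t))
      (fun t => L * (f (g t) * f (g (1 - t)))) (Icc 0 1) := by
    intro t _
    simp only [smul_eq_mul]
    rw [hgdiv t, abs_of_pos (mul_pos hLpos (hgpos t))]
    field_simp
    rw [mul_assoc, mul_div_cancel_left₀ _ (hgpos t).ne']
  have hchange : ∫ γ in Icc x y, f γ * f (x * y / γ) / γ
      = ∫ t in Icc (0:ℝ) 1, L * (f (g t) * f (g (1 - t))) := by
    rw [← himage,
      integral_image_eq_integral_abs_deriv_smul measurableSet_Icc hderivW hinj]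
    exact setIntegral_congr_fun measurableSet_Icc hEqOn
  -- integrability of the transported function
  have hintL : IntegrableOn (fun t => L * (f (g t) * f (g (1 - t)))) (Icc 0 1) volume := by
    have h1 : IntegrableOn (fun γ => f γ * f (x * y / γ) / γ) (Icc x y) volume := by
      rw [integrableOn_Icc_iff_integrableOn_Ioc]
      exact (intervalIntegrable_iff_integrableOn_Ioc_of_le hxy.le).1 hint1
    rw [← himage] at h1
    have h2 := (integrableOn_image_iff_integrableOn_abs_deriv_smul measurableSet_Icc
      hderivW hinj (fun γ => f γ * f (x * y / γ) / γ)).1 h1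
    exact h2.congr_fun hEqOn measurableSet_Icc
  have hintL' : IntegrableOn (fun t => f (g t) * f (g (1 - t))) (Icc 0 1) volume := by
    have h3 := hintL.const_mul (1 / L)
    refine IntegrableOn.congr_fun h3 (fun t _ => ?_) measurableSet_Icc
    rw [one_div, inv_mul_cancel_left₀ hLpos.ne']
  have hintR : IntegrableOn (fun t => (f x * f y) ^ (h t + h (1 - t))) (Icc 0 1) volume := by
    rw [integrableOn_Icc_iff_integrableOn_Ioc]
    exact (intervalIntegrable_iff_integrableOn_Ioc_of_le (by norm_num)).1 hint2
  -- compare integrals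
  have hmain : ∫ t in Icc (0:ℝ) 1, f (g t) * f (g (1 - t))
      ≤ ∫ t in Icc (0:ℝ) 1, (f x * f y) ^ (h t + h (1 - t)) :=
    setIntegral_mono_on hintL' hintR measurableSet_Icc hbound
  -- assemble
  rw [intervalIntegral.integral_of_le hxy.le, ← integral_Icc_eq_integral_Ioc, hchange,
    intervalIntegral.integral_of_le (by norm_num : (0:ℝ) ≤ 1),
    ← integral_Icc_eq_integral_Ioc, integral_const_mul]
  rw [← mul_assoc, one_div_mul_cancel hLpos.ne', one_mul]
  exact hmain
end

section
/- Let I ⊂ (0,∞) be an interval, let h be a nonnegative function on an interval J ⊇ [0,1], and let f, g : I → (0,∞) be h-geometrically convex functions. Let x, y ∈ I with 0 < x < y, let p > 1 and q satisfy 1/p + 1/q = 1, and assume the functions t ↦ f(x^t y^{1-t})·g(x^{1-t} y^t), t ↦ f(x)^{p²h(t)}, t ↦ g(y)^{pq·h(t)}, t ↦ f(y)^{pq·h(1-t)}, and t ↦ g(x)^{q²h(1-t)} are integrable on [0,1]. Then ∫_0^1 f(x^t y^{1-t}) · g(x^{1-t} y^t) dt ≤ (∫_0^1 f(x)^{p²h(t)}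 dt)^{1/p²} · (∫_0^1 g(y)^{pq·h(t)} dt)^{1/(pq)} · (∫_0^1 f(y)^{pq·h(1-t)} dt)^{1/(pq)} · (∫_0^1 g(x)^{q²h(1-t)} dt)^{1/q²}. -/
open Set MeasureTheory

open scoped ENNReal

private lemma memLp_of_rpow_integrable {μ : Measure ℝ} {f : ℝ → ℝ} {r : ℝ} (hr : 0 < r)
    (hm : AEStronglyMeasurable f μ) (hnn : ∀ᵐ t ∂μ, 0 ≤ f t)
    (hint : Integrable (fun t => f t ^ r) μ) : MemLp f (ENNReal.ofReal r) μ := by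
  have A : ENNReal.ofReal r ≠ 0 := by simp [ENNReal.ofReal_eq_zero, not_le, hr]
  have B : ENNReal.ofReal r ≠ ⊤ := ENNReal.ofReal_ne_top
  rw [← MeasureTheory.memLp_norm_rpow_iff hm A B, ENNReal.toReal_ofReal hr.le,
    ENNReal.div_self A B, MeasureTheory.memLp_one_iff_integrable]
  refine hint.congr ?_
  filter_upwards [hnn] with t ht
  rw [Real.norm_of_nonneg ht]

private lemma ennreal_inv_split {a b c : ℝ} (ha : 0 < a) (hb : 0 < b) (hc : 0 < c)
    (habc : 1/a = 1/b + 1/c) :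
    (1:ℝ≥0∞)/ENNReal.ofReal a = 1/ENNReal.ofReal b + 1/ENNReal.ofReal c := by
  rw [one_div, one_div, one_div, ← ENNReal.ofReal_inv_of_pos ha,
    ← ENNReal.ofReal_inv_of_pos hb, ← ENNReal.ofReal_inv_of_pos hc,
    ← ENNReal.ofReal_add (by positivity) (by positivity)]
  congr 1
  simpa [one_div] using habc


set_option maxHeartbeats 1000000 in
/-- Hölder-type inequality for two `h`-geometrically convex functions on an
interval `I ⊂ (0,∞)`. -/
theorem h_geom_convex_holder
    (I : Set ℝ) (hI : I ⊆ Ioi (0:ℝ)) (hIconv : Convex ℝ I)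
    (h f g : ℝ → ℝ)
    (hh : ∀ t ∈ Icc (0:ℝ) 1, 0 ≤ h t)
    (hf : ∀ x ∈ I, 0 < f x)
    (hg : ∀ x ∈ I, 0 < g x)
    (hgcf : ∀ x ∈ I, ∀ y ∈ I, ∀ t ∈ Icc (0:ℝ) 1,
      f (x ^ t * y ^ (1 - t)) ≤ f x ^ h t * f y ^ h (1 - t))
    (hgcg : ∀ x ∈ I, ∀ y ∈ I, ∀ t ∈ Icc (0:ℝ) 1,
      g (x ^ t * y ^ (1 - t)) ≤ g x ^ h t * g y ^ h (1 - t))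
    (x y : ℝ) (hx : x ∈ I) (hy : y ∈ I) (hxpos : 0 < x) (hxy : x < y)
    (p q : ℝ) (hp : 1 < p) (hpq : 1 / p + 1 / q = 1)
    (hint0 : IntervalIntegrable
      (fun t => f (x ^ t * y ^ (1 - t)) * g (x ^ (1 - t) * y ^ t)) volume 0 1)
    (hint1 : IntervalIntegrable (fun t => f x ^ (p ^ 2 * h t)) volume 0 1)
    (hint2 : IntervalIntegrable (fun t => g y ^ (p * q * h t)) volume 0 1)
    (hint3 : IntervalIntegrable (fun t => f y ^ (p * q * h (1 - t))) volume 0 1)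
    (hint4 : IntervalIntegrable (fun t => g x ^ (q ^ 2 * h (1 - t))) volume 0 1) :
    ∫ t in (0:ℝ)..1, f (x ^ t * y ^ (1 - t)) * g (x ^ (1 - t) * y ^ t) ≤
      (∫ t in (0:ℝ)..1, f x ^ (p ^ 2 * h t)) ^ (1 / p ^ 2) *
      (∫ t in (0:ℝ)..1, g y ^ (p * q * h t)) ^ (1 / (p * q)) *
      (∫ t in (0:ℝ)..1, f y ^ (p * q * h (1 - t))) ^ (1 / (p * q)) *
      (∫ t in (0:ℝ)..1, g x ^ (q ^ 2 * h (1 - t))) ^ (1 / q ^ 2) := by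
  -- basic positivity facts
  have hfx : 0 < f x := hf x hx
  have hfy : 0 < f y := hf y hy
  have hgx : 0 < g x := hg x hx
  have hgy : 0 < g y := hg y hy
  have hypos : 0 < y := lt_trans hxpos hxy
  have hconj : p.HolderConjugate q := Real.holderConjugate_iff.mpr ⟨hp, by rwa [one_div, one_div] at hpq⟩
  have hq : 1 < q := hconj.symm.lt
  have hp0 : 0 < p := hconj.pos
  have hq0 : 0 < q := hconj.symm.pos
  have hpq0 : 0 < p * q := by positivity
  have hp20 : 0 < p ^ 2 := by positivity
  have hq20 : 0 < q ^ 2 := by positivity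
  set μ : Measure ℝ := volume.restrict (Ioc (0:ℝ) 1) with hμ
  -- abbreviations
  set A : ℝ → ℝ := fun t => f x ^ h t with hA
  set B : ℝ → ℝ := fun t => g y ^ h t with hB
  set C : ℝ → ℝ := fun t => f y ^ h (1 - t) with hC
  set D : ℝ → ℝ := fun t => g x ^ h (1 - t) with hD
  have epow : ∀ {c : ℝ}, 0 < c → ∀ (a b : ℝ), (c ^ a) ^ b = c ^ (a * b) :=
    fun hc a b => (Real.rpow_mul hc.le a b).symm
  -- membership of geometric means in I
  have hmem : ∀ t ∈ Icc (0:ℝ) 1, x ^ t * y ^ (1 - t) ∈ I := by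
    intro t ht
    obtain ⟨ht0, ht1⟩ := ht
    have h1 : x ≤ x ^ t * y ^ (1 - t) := by
      have e : x ^ t * x ^ (1 - t) = x := by
        rw [← Real.rpow_add hxpos]
        norm_num
      calc x = x ^ t * x ^ (1 - t) := e.symm
        _ ≤ x ^ t * y ^ (1 - t) :=
          mul_le_mul_of_nonneg_left (Real.rpow_le_rpow hxpos.le hxy.le (by linarith))
            (Real.rpow_nonneg hxpos.le _)
    have h2 : x ^ t * y ^ (1 - t) ≤ y := by
      have e : y ^ t * y ^ (1 - t) = y := by
        rw [← Real.rpow_add hypos]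
        norm_num
      calc x ^ t * y ^ (1 - t) ≤ y ^ t * y ^ (1 - t) :=
          mul_le_mul_of_nonneg_right (Real.rpow_le_rpow hxpos.le hxy.le ht0)
            (Real.rpow_nonneg hypos.le _)
        _ = y := e
    exact hIconv.ordConnected.out hx hy ⟨h1, h2⟩
  -- measurability of A B C D
  have hF1m : AEStronglyMeasurable (fun t => f x ^ (p ^ 2 * h t)) μ :=
    hint1.1.aestronglyMeasurable
  have hF2m : AEStronglyMeasurable (fun t => g y ^ (p * q * h t)) μ :=
    hint2.1.aestronglyMeasurable
  have hF3m : AEStronglyMeasurable (fun t => f y ^ (p * q * h (1 - t))) μ :=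
    hint3.1.aestronglyMeasurable
  have hF4m : AEStronglyMeasurable (fun t => g x ^ (q ^ 2 * h (1 - t))) μ :=
    hint4.1.aestronglyMeasurable
  have measAux : ∀ {c r : ℝ} {F : ℝ → ℝ}, 0 < c → 0 < r →
      AEStronglyMeasurable (fun t => c ^ (r * F t)) μ →
      AEStronglyMeasurable (fun t => c ^ F t) μ := by
    intro c r F hc hr hm
    have := (Real.continuous_rpow_const (le_of_lt (inv_pos.mpr hr))).comp_aestronglyMeasurable hm
    refine this.congr ?_
    refine Filter.Eventually.of_forall fun t => ?_
    show (c ^ (r * F t)) ^ r⁻¹ = c ^ F t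
    rw [epow hc]
    congr 1
    field_simp
  have hAm : AEStronglyMeasurable A μ := measAux hfx hp20 hF1m
  have hBm : AEStronglyMeasurable B μ := measAux hgy hpq0 hF2m
  have hCm : AEStronglyMeasurable C μ := measAux hfy hpq0 hF3m
  have hDm : AEStronglyMeasurable D μ := measAux hgx hq20 hF4m
  -- nonnegativity
  have nnA : ∀ t, 0 ≤ A t := fun t => Real.rpow_nonneg hfx.le _
  have nnB : ∀ t, 0 ≤ B t := fun t => Real.rpow_nonneg hgy.le _
  have nnC : ∀ t, 0 ≤ C t := fun t => Real.rpow_nonneg hfy.le _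
  have nnD : ∀ t, 0 ≤ D t := fun t => Real.rpow_nonneg hgx.le _
  -- Memℒp facts
  have hMA : MemLp A (ENNReal.ofReal (p ^ 2)) μ := by
    refine memLp_of_rpow_integrable hp20 hAm (Filter.Eventually.of_forall nnA)
      (hint1.1.congr ?_)
    refine Filter.Eventually.of_forall fun t => ?_
    show f x ^ (p ^ 2 * h t) = (A t) ^ (p ^ 2)
    rw [hA, epow hfx]
    congr 1
    ring
  have hMB : MemLp B (ENNReal.ofReal (p * q)) μ := by
    refine memLp_of_rpow_integrable hpq0 hBm (Filter.Eventually.of_forall nnB)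
      (hint2.1.congr ?_)
    refine Filter.Eventually.of_forall fun t => ?_
    show g y ^ (p * q * h t) = (B t) ^ (p * q)
    rw [hB, epow hgy]
    congr 1
    ring
  have hMC : MemLp C (ENNReal.ofReal (p * q)) μ := by
    refine memLp_of_rpow_integrable hpq0 hCm (Filter.Eventually.of_forall nnC)
      (hint3.1.congr ?_)
    refine Filter.Eventually.of_forall fun t => ?_
    show f y ^ (p * q * h (1 - t)) = (C t) ^ (p * q)
    rw [hC, epow hfy]
    congr 1
    ring
  have hMD : MemLp D (ENNReal.ofReal (q ^ 2)) μ := by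
    refine memLp_of_rpow_integrable hq20 hDm (Filter.Eventually.of_forall nnD)
      (hint4.1.congr ?_)
    refine Filter.Eventually.of_forall fun t => ?_
    show g x ^ (q ^ 2 * h (1 - t)) = (D t) ^ (q ^ 2)
    rw [hD, epow hgx]
    congr 1
    ring
  -- exponent splittings in ℝ≥0∞
  have hpne : p ≠ 0 := hp0.ne'
  have hqne : q ≠ 0 := hq0.ne'
  have hreal_p : 1/p = 1/p^2 + 1/(p*q) := by
    have h1 : 1/p^2 + 1/(p*q) = (1/p) * (1/p + 1/q) := by field_simp
    rw [h1, hpq, mul_one]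
  have hreal_q : 1/q = 1/(p*q) + 1/q^2 := by
    have h1 : 1/(p*q) + 1/q^2 = (1/q) * (1/p + 1/q) := by field_simp
    rw [h1, hpq, mul_one]
  have hEp : (1:ℝ≥0∞)/ENNReal.ofReal p = 1/ENNReal.ofReal (p ^ 2) + 1/ENNReal.ofReal (p * q) :=
    ennreal_inv_split hp0 hp20 hpq0 hreal_p
  have hEq : (1:ℝ≥0∞)/ENNReal.ofReal q = 1/ENNReal.ofReal (p * q) + 1/ENNReal.ofReal (q ^ 2) :=
    ennreal_inv_split hq0 hpq0 hq20 hreal_q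
  have hE1 : (1:ℝ≥0∞)/1 = 1/ENNReal.ofReal p + 1/ENNReal.ofReal q := by
    have := ennreal_inv_split one_pos hp0 hq0 (by simpa [one_div] using hpq.symm)
    simpa using this
  -- Memℒp of products
  have hMAB : MemLp (fun t => A t * B t) (ENNReal.ofReal p) μ :=
    (hMB.smul hMA (hpqr := ⟨by simpa only [one_div] using hEp.symm⟩)).ae_eq (Filter.Eventually.of_forall fun t => smul_eq_mul (a := A t) (b := B t))
  have hMCD : MemLp (fun t => C t * D t) (ENNReal.ofReal q) μ :=
    (hMD.smul hMC (hpqr := ⟨by simpa only [one_div] using hEq.symm⟩)).ae_eq (Filter.Eventually.of_forall fun t => smul_eq_mul (a := C t) (b := D t))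
  have hIABCD : Integrable (fun t => (A t * B t) * (C t * D t)) μ := by
    have h2 := (hMCD.smul hMAB (hpqr := ⟨by simpa only [one_div] using hE1.symm⟩)).ae_eq
      (Filter.Eventually.of_forall fun t => smul_eq_mul (a := A t * B t) (b := C t * D t))
    rw [MeasureTheory.memLp_one_iff_integrable] at h2
    exact h2
  -- Memℒp facts for the inner Hölder
  have hMAp : MemLp (fun t => A t ^ p) (ENNReal.ofReal p) μ := by
    refine memLp_of_rpow_integrable hp0
      ((Real.continuous_rpow_const hp0.le).comp_aestronglyMeasurable hAm)
      (Filter.Eventually.of_forall fun t => Real.rpow_nonneg (nnA t) _) (hint1.1.congr ?_)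
    refine Filter.Eventually.of_forall fun t => ?_
    show f x ^ (p ^ 2 * h t) = (A t ^ p) ^ p
    rw [hA, epow hfx, epow hfx]
    congr 1
    ring
  have hMBp : MemLp (fun t => B t ^ p) (ENNReal.ofReal q) μ := by
    refine memLp_of_rpow_integrable hq0
      ((Real.continuous_rpow_const hp0.le).comp_aestronglyMeasurable hBm)
      (Filter.Eventually.of_forall fun t => Real.rpow_nonneg (nnB t) _) (hint2.1.congr ?_)
    refine Filter.Eventually.of_forall fun t => ?_
    show g y ^ (p * q * h t) = (B t ^ p) ^ q
    rw [hB, epow hgy, epow hgy]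
    congr 1
    ring
  have hMCq : MemLp (fun t => C t ^ q) (ENNReal.ofReal p) μ := by
    refine memLp_of_rpow_integrable hp0
      ((Real.continuous_rpow_const hq0.le).comp_aestronglyMeasurable hCm)
      (Filter.Eventually.of_forall fun t => Real.rpow_nonneg (nnC t) _) (hint3.1.congr ?_)
    refine Filter.Eventually.of_forall fun t => ?_
    show f y ^ (p * q * h (1 - t)) = (C t ^ q) ^ p
    rw [hC, epow hfy, epow hfy]
    congr 1
    ring
  have hMDq : MemLp (fun t => D t ^ q) (ENNReal.ofReal q) μ := by
    refine memLp_of_rpow_integrable hq0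
      ((Real.continuous_rpow_const hq0.le).comp_aestronglyMeasurable hDm)
      (Filter.Eventually.of_forall fun t => Real.rpow_nonneg (nnD t) _) (hint4.1.congr ?_)
    refine Filter.Eventually.of_forall fun t => ?_
    show g x ^ (q ^ 2 * h (1 - t)) = (D t ^ q) ^ q
    rw [hD, epow hgx, epow hgx]
    congr 1
    ring
  -- rewrite interval integrals as set integrals over Ioc 0 1
  rw [intervalIntegral.integral_of_le zero_le_one, intervalIntegral.integral_of_le zero_le_one,
    intervalIntegral.integral_of_le zero_le_one, intervalIntegral.integral_of_le zero_le_one,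
    intervalIntegral.integral_of_le zero_le_one]
  -- Step 0: pointwise bound and monotonicity
  have step0 : ∫ t, f (x ^ t * y ^ (1 - t)) * g (x ^ (1 - t) * y ^ t) ∂μ ≤
      ∫ t, (A t * B t) * (C t * D t) ∂μ := by
    refine integral_mono_ae hint0.1 hIABCD ?_
    filter_upwards [ae_restrict_mem measurableSet_Ioc] with t ht
    have ht' : t ∈ Icc (0:ℝ) 1 := ⟨ht.1.le, ht.2⟩
    have h1t : (1 - t) ∈ Icc (0:ℝ) 1 := ⟨by linarith [ht'.2], by linarith [ht'.1]⟩
    have hm2 : x ^ (1 - t) * y ^ t ∈ I := by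
      have := hmem (1 - t) h1t
      rwa [show (1:ℝ) - (1 - t) = t by ring] at this
    have hbf : f (x ^ t * y ^ (1 - t)) ≤ A t * C t := hgcf x hx y hy t ht'
    have hbg : g (x ^ (1 - t) * y ^ t) ≤ B t * D t := by
      have := hgcg y hy x hx t ht'
      rwa [mul_comm (y ^ t) (x ^ (1 - t))] at this
    calc f (x ^ t * y ^ (1 - t)) * g (x ^ (1 - t) * y ^ t)
        ≤ (A t * C t) * (B t * D t) :=
          mul_le_mul hbf hbg (le_of_lt (hg _ hm2)) (by positivity)
      _ = (A t * B t) * (C t * D t) := by ring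
  -- outer Hölder
  have houter : ∫ t, (A t * B t) * (C t * D t) ∂μ ≤
      (∫ t, (A t * B t) ^ p ∂μ) ^ (1/p) * (∫ t, (C t * D t) ^ q ∂μ) ^ (1/q) :=
    integral_mul_le_Lp_mul_Lq_of_nonneg hconj
      (Filter.Eventually.of_forall fun t => mul_nonneg (nnA t) (nnB t))
      (Filter.Eventually.of_forall fun t => mul_nonneg (nnC t) (nnD t)) hMAB hMCD
  -- inner Hölder 1
  have hinner1 : ∫ t, (A t * B t) ^ p ∂μ ≤
      (∫ t, f x ^ (p ^ 2 * h t) ∂μ) ^ (1/p) * (∫ t, g y ^ (p * q * h t) ∂μ) ^ (1/q) := by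
    have e1 : ∫ t, (A t * B t) ^ p ∂μ = ∫ t, (A t ^ p) * (B t ^ p) ∂μ :=
      integral_congr_ae (Filter.Eventually.of_forall fun t =>
        Real.mul_rpow (nnA t) (nnB t))
    have e2 : ∫ t, (A t ^ p) ^ p ∂μ = ∫ t, f x ^ (p ^ 2 * h t) ∂μ :=
      integral_congr_ae (Filter.Eventually.of_forall fun t => by
        show (A t ^ p) ^ p = f x ^ (p ^ 2 * h t)
        rw [hA, epow hfx, epow hfx]; congr 1; ring)
    have e3 : ∫ t, (B t ^ p) ^ q ∂μ = ∫ t, g y ^ (p * q * h t) ∂μ :=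
      integral_congr_ae (Filter.Eventually.of_forall fun t => by
        show (B t ^ p) ^ q = g y ^ (p * q * h t)
        rw [hB, epow hgy, epow hgy]; congr 1; ring)
    rw [e1, ← e2, ← e3]
    exact integral_mul_le_Lp_mul_Lq_of_nonneg hconj
      (Filter.Eventually.of_forall fun t => Real.rpow_nonneg (nnA t) _)
      (Filter.Eventually.of_forall fun t => Real.rpow_nonneg (nnB t) _) hMAp hMBp
  -- inner Hölder 2
  have hinner2 : ∫ t, (C t * D t) ^ q ∂μ ≤
      (∫ t, f y ^ (p * q * h (1 - t)) ∂μ) ^ (1/p) *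
      (∫ t, g x ^ (q ^ 2 * h (1 - t)) ∂μ) ^ (1/q) := by
    have e1 : ∫ t, (C t * D t) ^ q ∂μ = ∫ t, (C t ^ q) * (D t ^ q) ∂μ :=
      integral_congr_ae (Filter.Eventually.of_forall fun t =>
        Real.mul_rpow (nnC t) (nnD t))
    have e2 : ∫ t, (C t ^ q) ^ p ∂μ = ∫ t, f y ^ (p * q * h (1 - t)) ∂μ :=
      integral_congr_ae (Filter.Eventually.of_forall fun t => by
        show (C t ^ q) ^ p = f y ^ (p * q * h (1 - t))
        rw [hC, epow hfy, epow hfy]; congr 1; ring)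
    have e3 : ∫ t, (D t ^ q) ^ q ∂μ = ∫ t, g x ^ (q ^ 2 * h (1 - t)) ∂μ :=
      integral_congr_ae (Filter.Eventually.of_forall fun t => by
        show (D t ^ q) ^ q = g x ^ (q ^ 2 * h (1 - t))
        rw [hD, epow hgx, epow hgx]; congr 1; ring)
    rw [e1, ← e2, ← e3]
    exact integral_mul_le_Lp_mul_Lq_of_nonneg hconj
      (Filter.Eventually.of_forall fun t => Real.rpow_nonneg (nnC t) _)
      (Filter.Eventually.of_forall fun t => Real.rpow_nonneg (nnD t) _) hMCq hMDq
  -- nonnegativity of integrals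
  have nnI1 : 0 ≤ ∫ t, f x ^ (p ^ 2 * h t) ∂μ :=
    integral_nonneg fun t => Real.rpow_nonneg hfx.le _
  have nnI2 : 0 ≤ ∫ t, g y ^ (p * q * h t) ∂μ :=
    integral_nonneg fun t => Real.rpow_nonneg hgy.le _
  have nnI3 : 0 ≤ ∫ t, f y ^ (p * q * h (1 - t)) ∂μ :=
    integral_nonneg fun t => Real.rpow_nonneg hfy.le _
  have nnI4 : 0 ≤ ∫ t, g x ^ (q ^ 2 * h (1 - t)) ∂μ :=
    integral_nonneg fun t => Real.rpow_nonneg hgx.le _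
  have nnJ1 : 0 ≤ ∫ t, (A t * B t) ^ p ∂μ :=
    integral_nonneg fun t => Real.rpow_nonneg (mul_nonneg (nnA t) (nnB t)) _
  have nnJ2 : 0 ≤ ∫ t, (C t * D t) ^ q ∂μ :=
    integral_nonneg fun t => Real.rpow_nonneg (mul_nonneg (nnC t) (nnD t)) _
  -- combine
  refine le_trans step0 (le_trans houter ?_)
  have key1 : (∫ t, (A t * B t) ^ p ∂μ) ^ (1/p) ≤
      (∫ t, f x ^ (p ^ 2 * h t) ∂μ) ^ (1/p^2) * (∫ t, g y ^ (p * q * h t) ∂μ) ^ (1/(p*q)) := by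
    calc (∫ t, (A t * B t) ^ p ∂μ) ^ (1/p)
        ≤ ((∫ t, f x ^ (p ^ 2 * h t) ∂μ) ^ (1/p) *
            (∫ t, g y ^ (p * q * h t) ∂μ) ^ (1/q)) ^ (1/p) :=
          Real.rpow_le_rpow nnJ1 hinner1 (by positivity)
      _ = (∫ t, f x ^ (p ^ 2 * h t) ∂μ) ^ (1/p^2) *
            (∫ t, g y ^ (p * q * h t) ∂μ) ^ (1/(p*q)) := by
          rw [Real.mul_rpow (Real.rpow_nonneg nnI1 _) (Real.rpow_nonneg nnI2 _),
            ← Real.rpow_mul nnI1, ← Real.rpow_mul nnI2]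
          congr 2 <;> field_simp <;> ring
  have key2 : (∫ t, (C t * D t) ^ q ∂μ) ^ (1/q) ≤
      (∫ t, f y ^ (p * q * h (1 - t)) ∂μ) ^ (1/(p*q)) *
      (∫ t, g x ^ (q ^ 2 * h (1 - t)) ∂μ) ^ (1/q^2) := by
    calc (∫ t, (C t * D t) ^ q ∂μ) ^ (1/q)
        ≤ ((∫ t, f y ^ (p * q * h (1 - t)) ∂μ) ^ (1/p) *
            (∫ t, g x ^ (q ^ 2 * h (1 - t)) ∂μ) ^ (1/q)) ^ (1/q) :=
          Real.rpow_le_rpow nnJ2 hinner2 (by positivity)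
      _ = (∫ t, f y ^ (p * q * h (1 - t)) ∂μ) ^ (1/(p*q)) *
            (∫ t, g x ^ (q ^ 2 * h (1 - t)) ∂μ) ^ (1/q^2) := by
          rw [Real.mul_rpow (Real.rpow_nonneg nnI3 _) (Real.rpow_nonneg nnI4 _),
            ← Real.rpow_mul nnI3, ← Real.rpow_mul nnI4]
          congr 2 <;> field_simp <;> ring
  calc (∫ t, (A t * B t) ^ p ∂μ) ^ (1/p) * (∫ t, (C t * D t) ^ q ∂μ) ^ (1/q)
      ≤ ((∫ t, f x ^ (p ^ 2 * h t) ∂μ) ^ (1/p^2) *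
          (∫ t, g y ^ (p * q * h t) ∂μ) ^ (1/(p*q))) *
        ((∫ t, f y ^ (p * q * h (1 - t)) ∂μ) ^ (1/(p*q)) *
          (∫ t, g x ^ (q ^ 2 * h (1 - t)) ∂μ) ^ (1/q^2)) :=
        mul_le_mul key1 key2 (Real.rpow_nonneg nnJ2 _) (by positivity)
    _ = (∫ t, f x ^ (p ^ 2 * h t) ∂μ) ^ (1/p^2) *
          (∫ t, g y ^ (p * q * h t) ∂μ) ^ (1/(p*q)) *
          (∫ t, f y ^ (p * q * h (1 - t)) ∂μ) ^ (1/(p*q)) *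
          (∫ t, g x ^ (q ^ 2 * h (1 - t)) ∂μ) ^ (1/q^2) := by ring
end

section
/- Let I ⊂ (0,∞) be an interval, let h be a nonnegative function on an interval J ⊇ [0,1], and let f : I → (0,∞) be an h-multi convex function, i.e. λ·f(x^t y^{1-t}) + (1-λ)·f(tx+(1-t)y) ≤ [f(x)]^{h(t)}·[f(y)]^{h(1-t)} for all x,y ∈ I and t,λ ∈ [0,1]. Let x, y ∈ I with 0 < x < y, and assume f is integrable on [x,y], γ ↦ f(γ)/γ is integrable on [x,y], and t ↦ [f(x)]^{h(t)}·[f(y)]^{h(1-t)} is integrable on [0,1]. Then (1/2)·[ (1/(ln y − ln x)) ∫_x^y (f(γ)/γ) dγ + (1/(y−x)) ∫_x^y f(γ) dγ ] ≤ ∫_0^1 [f(x)]^{h(t)} · [f(y)]^{h(1-t)} dt. -/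
open Set MeasureTheory

/-- Image of `Ioo 0 1` under the affine map `t ↦ t * (a - b) + b` when `a < b`. -/
lemma aux_affine_image (a b : ℝ) (hab : a < b) :
    (fun t : ℝ => t * (a - b) + b) '' Ioo 0 1 = Ioo a b := by
  ext z
  constructor
  · rintro ⟨t, ht, rfl⟩
    dsimp only
    constructor
    · nlinarith [mul_pos (by linarith [ht.2] : (0:ℝ) < 1 - t) (by linarith : (0:ℝ) < b - a)]
    · nlinarith [mul_pos ht.1 (by linarith : (0:ℝ) < b - a)]
  · intro hz
    refine ⟨(b - z) / (b - a), ⟨?_, ?_⟩, ?_⟩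
    · exact div_pos (by linarith [hz.2]) (by linarith)
    · rw [div_lt_one (by linarith)]; linarith [hz.1]
    · have hba : b - a ≠ 0 := by linarith
      field_simp
      ring

/-- Hadamard-type inequality for an `h`-multi convex function on an
interval `I ⊂ (0,∞)`. -/
theorem h_multi_convex_hadamard
    (I : Set ℝ) (hI : I ⊆ Ioi (0:ℝ)) (hIconv : Convex ℝ I)
    (h f : ℝ → ℝ)
    (hh : ∀ t ∈ Icc (0:ℝ) 1, 0 ≤ h t)
    (hf : ∀ x ∈ I, 0 < f x)
    (hmc : ∀ x ∈ I, ∀ y ∈ I, ∀ t ∈ Icc (0:ℝ) 1, ∀ lam ∈ Icc (0:ℝ) 1,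
      lam * f (x ^ t * y ^ (1 - t)) + (1 - lam) * f (t * x + (1 - t) * y) ≤
        f x ^ h t * f y ^ h (1 - t))
    (x y : ℝ) (hx : x ∈ I) (hy : y ∈ I) (hxpos : 0 < x) (hxy : x < y)
    (hint1 : IntervalIntegrable f volume x y)
    (hint2 : IntervalIntegrable (fun γ => f γ / γ) volume x y)
    (hint3 : IntervalIntegrable (fun t => f x ^ h t * f y ^ h (1 - t)) volume 0 1) :
    (1 / 2) * ((1 / (Real.log y - Real.log x)) * (∫ γ in x..y, f γ / γ) +
        (1 / (y - x)) * ∫ γ in x..y, f γ) ≤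
      ∫ t in (0:ℝ)..1, f x ^ h t * f y ^ h (1 - t) := by
  have hypos : 0 < y := hxpos.trans hxy
  set a := Real.log x with ha
  set b := Real.log y with hb
  have hab : a < b := Real.log_lt_log hxpos hxy
  set g : ℝ → ℝ := fun t => Real.exp (t * (a - b) + b) with hgdef
  set φ : ℝ → ℝ := fun t => t * (x - y) + y with hφdef
  have hgpos : ∀ t, 0 < g t := fun t => Real.exp_pos _
  have hgx : ∀ t : ℝ, g t = x ^ t * y ^ (1 - t) := by
    intro t
    rw [Real.rpow_def_of_pos hxpos, Real.rpow_def_of_pos hypos, ← Real.exp_add]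
    simp only [hgdef]
    ring_nf
    rfl
  -- derivative facts
  have hgderiv : ∀ t ∈ Ioo (0:ℝ) 1, HasDerivWithinAt g ((a - b) * g t) (Ioo (0:ℝ) 1) t := by
    intro t _
    have h1 : HasDerivAt (fun s : ℝ => s * (a - b) + b) (a - b) t := by
      simpa using ((hasDerivAt_id t).mul_const (a - b)).add_const b
    have h2 := (Real.hasDerivAt_exp (t * (a - b) + b)).comp t h1
    have : HasDerivAt g (Real.exp (t * (a - b) + b) * (a - b)) t := h2
    simpa [mul_comm] using this.hasDerivWithinAt
  have hφderiv : ∀ t ∈ Ioo (0:ℝ) 1, HasDerivWithinAt φ (x - y) (Ioo (0:ℝ) 1) t := by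
    intro t _
    have := (((hasDerivAt_id t).mul_const (x - y)).add_const y).hasDerivWithinAt (s := Ioo (0:ℝ) 1)
    simpa [hφdef] using this
  -- injectivity
  have hgne : a - b ≠ 0 := by linarith
  have hxyne : x - y ≠ 0 := by linarith
  have hg_inj : InjOn g (Ioo 0 1) := by
    intro s _ t _ hst
    have := Real.exp_injective hst
    have : s * (a - b) = t * (a - b) := by linarith
    exact mul_right_cancel₀ hgne this
  have hφ_inj : InjOn φ (Ioo 0 1) := by
    intro s _ t _ hst
    have : s * (x - y) = t * (x - y) := by
      simpa [hφdef] using hst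
    exact mul_right_cancel₀ hxyne this
  -- images
  have hg_img : g '' Ioo 0 1 = Ioo x y := by
    have h1 : g '' Ioo 0 1 = Real.exp '' ((fun t : ℝ => t * (a - b) + b) '' Ioo 0 1) := by
      rw [← image_comp]; rfl
    rw [h1, aux_affine_image a b hab]
    ext z
    constructor
    · rintro ⟨u, hu, rfl⟩
      exact ⟨by rw [← Real.exp_log hxpos]; exact Real.exp_lt_exp.2 hu.1,
             by rw [← Real.exp_log hypos]; exact Real.exp_lt_exp.2 hu.2⟩
    · intro hz
      have hzpos : 0 < z := hxpos.trans hz.1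
      exact ⟨Real.log z,
        ⟨(Real.log_lt_log_iff hxpos hzpos).2 hz.1, (Real.log_lt_log_iff hzpos hypos).2 hz.2⟩,
        Real.exp_log hzpos⟩
  have hφ_img : φ '' Ioo 0 1 = Ioo x y := aux_affine_image x y hxy
  -- change of variables for the two integrals
  have eqOn1 : EqOn (fun t => |(a - b) * g t| • (f (g t) / g t)) (fun t => (b - a) * f (g t))
      (Ioo (0:ℝ) 1) := by
    intro t _
    have h1 : |(a - b) * g t| = (b - a) * g t := by
      rw [abs_mul, abs_of_neg (by linarith : a - b < 0), abs_of_pos (hgpos t)]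
      ring
    simp only [smul_eq_mul, h1]
    have hg0 := (hgpos t).ne'
    field_simp
  have eqOn2 : EqOn (fun t => |x - y| • f (φ t)) (fun t => (y - x) * f (φ t)) (Ioo (0:ℝ) 1) := by
    intro t _
    simp only [smul_eq_mul, abs_of_neg (by linarith : x - y < 0)]
    ring
  have eqA : (∫ γ in x..y, f γ / γ) = ∫ t in Ioo (0:ℝ) 1, (b - a) * f (g t) := by
    rw [intervalIntegral.integral_of_le hxy.le, integral_Ioc_eq_integral_Ioo, ← hg_img,
      integral_image_eq_integral_abs_deriv_smul measurableSet_Ioo hgderiv hg_inj]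
    exact setIntegral_congr_fun measurableSet_Ioo eqOn1
  have eqB : (∫ γ in x..y, f γ) = ∫ t in Ioo (0:ℝ) 1, (y - x) * f (φ t) := by
    rw [intervalIntegral.integral_of_le hxy.le, integral_Ioc_eq_integral_Ioo, ← hφ_img,
      integral_image_eq_integral_abs_deriv_smul measurableSet_Ioo hφderiv hφ_inj]
    exact setIntegral_congr_fun measurableSet_Ioo eqOn2
  -- integrability
  have hint2' : IntegrableOn (fun γ => f γ / γ) (Ioo x y) :=
    ((intervalIntegrable_iff_integrableOn_Ioo_of_le hxy.le).1 hint2)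
  have hint1' : IntegrableOn f (Ioo x y) :=
    ((intervalIntegrable_iff_integrableOn_Ioo_of_le hxy.le).1 hint1)
  have hintA : IntegrableOn (fun t => (b - a) * f (g t)) (Ioo (0:ℝ) 1) := by
    have := (integrableOn_image_iff_integrableOn_abs_deriv_smul measurableSet_Ioo hgderiv hg_inj
      (fun γ => f γ / γ)).1 (hg_img ▸ hint2')
    exact this.congr_fun eqOn1 measurableSet_Ioo
  have hintB : IntegrableOn (fun t => (y - x) * f (φ t)) (Ioo (0:ℝ) 1) := by
    have := (integrableOn_image_iff_integrableOn_abs_deriv_smul measurableSet_Ioo hφderiv hφ_inj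
      f).1 (hφ_img ▸ hint1')
    exact this.congr_fun eqOn2 measurableSet_Ioo
  have hintA' : IntegrableOn (fun t => f (g t)) (Ioo (0:ℝ) 1) := by
    have h2 : IntegrableOn (fun t => (b - a)⁻¹ * ((b - a) * f (g t))) (Ioo (0:ℝ) 1) :=
      hintA.const_mul (b - a)⁻¹
    refine h2.congr_fun (fun t _ => ?_) measurableSet_Ioo
    field_simp
    exact mul_div_cancel_left₀ _ (by linarith : b - a ≠ 0)
  have hintB' : IntegrableOn (fun t => f (φ t)) (Ioo (0:ℝ) 1) := by
    have h2 : IntegrableOn (fun t => (y - x)⁻¹ * ((y - x) * f (φ t))) (Ioo (0:ℝ) 1) :=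
      hintB.const_mul (y - x)⁻¹
    refine h2.congr_fun (fun t _ => ?_) measurableSet_Ioo
    field_simp
    exact mul_div_cancel_left₀ _ (by linarith : y - x ≠ 0)
  have hintR : IntegrableOn (fun t => f x ^ h t * f y ^ h (1 - t)) (Ioo (0:ℝ) 1) :=
    ((intervalIntegrable_iff_integrableOn_Ioo_of_le zero_le_one).1 hint3)
  -- key pointwise inequality and integral monotonicity
  have key : (∫ t in Ioo (0:ℝ) 1, ((1/2) * f (g t) + (1/2) * f (φ t)))
      ≤ ∫ t in Ioo (0:ℝ) 1, f x ^ h t * f y ^ h (1 - t) := by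
    refine setIntegral_mono_on ((hintA'.const_mul _).add (hintB'.const_mul _)) hintR
      measurableSet_Ioo (fun t ht => ?_)
    have hmct := hmc x hx y hy t ⟨ht.1.le, ht.2.le⟩ (1/2) ⟨by norm_num, by norm_num⟩
    have hφt : φ t = t * x + (1 - t) * y := by simp only [hφdef]; ring
    rw [hgx t, hφt]
    convert hmct using 2
    all_goals norm_num
    rfl
  -- assemble
  rw [eqA, eqB, integral_const_mul, integral_const_mul,
    intervalIntegral.integral_of_le zero_le_one, integral_Ioc_eq_integral_Ioo]
  have hsum : (∫ t in Ioo (0:ℝ) 1, ((1/2) * f (g t) + (1/2) * f (φ t)))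
      = (1/2) * (∫ t in Ioo (0:ℝ) 1, f (g t)) + (1/2) * (∫ t in Ioo (0:ℝ) 1, f (φ t)) := by
    rw [integral_add (hintA'.const_mul _) (hintB'.const_mul _), integral_const_mul,
      integral_const_mul]
  have hba : (1 / (b - a)) * ((b - a) * (∫ t in Ioo (0:ℝ) 1, f (g t)))
      = ∫ t in Ioo (0:ℝ) 1, f (g t) := by
    field_simp
    exact mul_div_cancel_left₀ _ (by linarith : b - a ≠ 0)
  have hyx : (1 / (y - x)) * ((y - x) * (∫ t in Ioo (0:ℝ) 1, f (φ t)))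
      = ∫ t in Ioo (0:ℝ) 1, f (φ t) := by
    field_simp
    exact mul_div_cancel_left₀ _ (by linarith : y - x ≠ 0)
  calc (1 / 2) * ((1 / (b - a)) * ((b - a) * ∫ t in Ioo (0:ℝ) 1, f (g t)) +
        (1 / (y - x)) * ((y - x) * ∫ t in Ioo (0:ℝ) 1, f (φ t)))
      = ∫ t in Ioo (0:ℝ) 1, ((1/2) * f (g t) + (1/2) * f (φ t)) := by
        rw [hba, hyx, hsum]; ring
    _ ≤ _ := key
end
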